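/- Let (X, 𝓔) be an infinite finitary coarse space. Then every permutation of X is an asymorphism of (X, 𝓔) if and only if there exists an infinite cardinal κ ≤ |X|⁺ such that (X, 𝓔) = X_G for G = S_X^{<κ}. -/

import Mathlib

open Set

/-- Composition of two relations (as subsets of `X × X`). -/
def relComp {X : Type*} (s t : Set (X × X)) : Set (X × X) :=
  {p | ∃ z, (p.1, z) ∈ s ∧ (z, p.2) ∈ t}

/-- Inverse of a relation. -/
def relInv {X : Type*} (s : Set (X × X)) : Set (X × X) := {p | (p.2, p.1) ∈ s}

/-- A coarse structure on `X`: a family of reflexive relations closed under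
composition, inversion and reflexive subrelations, whose union is `X × X`. -/
structure IsCoarse {X : Type*} (𝓔 : Set (Set (X × X))) : Prop where
  refl : ∀ s ∈ 𝓔, ∀ x : X, (x, x) ∈ s
  comp : ∀ s ∈ 𝓔, ∀ t ∈ 𝓔, relComp s t ∈ 𝓔
  inv : ∀ s ∈ 𝓔, relInv s ∈ 𝓔
  subrel : ∀ s ∈ 𝓔, ∀ t, (∀ x : X, (x, x) ∈ t) → t ⊆ s → t ∈ 𝓔
  cover : ∀ p : X × X, ∃ s ∈ 𝓔, p ∈ s

/-- The ball of radius `s` around `x`. -/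
def ball {X : Type*} (s : Set (X × X)) (x : X) : Set X := {y | (x, y) ∈ s}

/-- A set is bounded if it is contained in some ball. -/
def IsBoundedIn {X : Type*} (𝓔 : Set (Set (X × X))) (B : Set X) : Prop :=
  ∃ s ∈ 𝓔, ∃ x : X, B ⊆ ball s x

/-- A bornology: closed under subsets and finite unions, contains all finite sets. -/
def IsBornology {X : Type*} (𝓑 : Set (Set X)) : Prop :=
  (∀ A ∈ 𝓑, ∀ B ⊆ A, B ∈ 𝓑) ∧ (∀ A ∈ 𝓑, ∀ B ∈ 𝓑, A ∪ B ∈ 𝓑) ∧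
    (∀ A : Set X, A.Finite → A ∈ 𝓑)

/-- The entourage `E_B = Δ_X ∪ (B × B)` of the discrete coarse space. -/
def EB {X : Type*} (B : Set X) : Set (X × X) :=
  {p | p.1 = p.2 ∨ (p.1 ∈ B ∧ p.2 ∈ B)}

/-- The discrete coarse structure defined by a bornology `𝓑`. -/
def discreteCoarse {X : Type*} (𝓑 : Set (Set X)) : Set (Set (X × X)) :=
  {s | (∀ x : X, (x, x) ∈ s) ∧ ∃ B ∈ 𝓑, s ⊆ EB B}

/-- `𝓔'` is a base for `𝓔`. -/
def IsBase {X : Type*} (𝓔' 𝓔 : Set (Set (X × X))) : Prop :=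
  𝓔' ⊆ 𝓔 ∧ ∀ s ∈ 𝓔, ∃ t ∈ 𝓔', s ⊆ t

/-- Discrete coarse space: outside some bounded set all balls are singletons. -/
def IsDiscreteCoarse {X : Type*} (𝓔 : Set (Set (X × X))) : Prop :=
  ∀ s ∈ 𝓔, ∃ B : Set X, IsBoundedIn 𝓔 B ∧ ∀ x ∉ B, ball s x = {x}

/-- A self-map is bornologous if it sends bounded sets to bounded sets. -/
def Bornologous {X : Type*} (𝓔 : Set (Set (X × X))) (f : X → X) : Prop :=
  ∀ B : Set X, IsBoundedIn 𝓔 B → IsBoundedIn 𝓔 (f '' B)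

/-- A self-map is macro-uniform. -/
def MacroUniform {X : Type*} (𝓔 : Set (Set (X × X))) (f : X → X) : Prop :=
  ∀ s ∈ 𝓔, ∃ t ∈ 𝓔, ∀ x y : X, (x, y) ∈ s → (f x, f y) ∈ t

/-- The entourage determined by a finite set `F` of permutations. -/
def EF {X : Type*} (F : Finset (Equiv.Perm X)) : Set (X × X) :=
  {p | ∃ g ∈ F, p.2 = g p.1}

/-- The coarse structure on `X` generated by a set `G` of permutations of `X`
(with base the entourages `EF F`, `F ⊆ G` finite containing the identity). -/
def permCoarse {X : Type*} (G : Set (Equiv.Perm X)) : Set (Set (X × X)) :=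
  {s | (∀ x : X, (x, x) ∈ s) ∧
    ∃ F : Finset (Equiv.Perm X), ↑F ⊆ G ∧ (1 : Equiv.Perm X) ∈ F ∧ s ⊆ EF F}

/-- The support of a permutation. -/
def psupp {X : Type*} (g : Equiv.Perm X) : Set X := {x | g x ≠ x}

/-- Permutations of support of cardinality less than `κ`. -/
def SuppLT (X : Type*) (κ : Cardinal) : Set (Equiv.Perm X) :=
  {g | Cardinal.mk (psupp g) < κ}

/-- A permutation compatible with the coarse structure `𝓔`. -/
def Compatible {X : Type*} (𝓔 : Set (Set (X × X))) (g : Equiv.Perm X) : Prop :=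
  ∃ s ∈ 𝓔, ∀ x : X, (x, g x) ∈ s

/-- A finitary coarse space: uniformly bounded finite balls. -/
def Finitary {X : Type*} (𝓔 : Set (Set (X × X))) : Prop :=
  ∀ s ∈ 𝓔, ∃ n : ℕ, ∀ x : X, (ball s x).Finite ∧ (ball s x).ncard < n

/-- A locally finite coarse space: all balls finite. -/
def LocallyFinite' {X : Type*} (𝓔 : Set (Set (X × X))) : Prop :=
  ∀ s ∈ 𝓔, ∀ x : X, (ball s x).Finite

/-- A crowded subset: some entourage has nontrivial balls at all its points. -/
def Crowded {X : Type*} (𝓔 : Set (Set (X × X))) (Y : Set X) : Prop :=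
  ∃ s ∈ 𝓔, ∀ y ∈ Y, 1 < (ball s y).ncard

/-- An asymorphism: a permutation which is macro-uniform in both directions. -/
def IsAsymorphism {X : Type*} (𝓔 : Set (Set (X × X))) (h : Equiv.Perm X) : Prop :=
  MacroUniform 𝓔 h ∧ MacroUniform 𝓔 h.symm

section Helpers

variable {X : Type*} {𝓔 : Set (Set (X × X))}

/-- The diagonal relation. -/
def diagRel (X : Type*) : Set (X × X) := {p | p.1 = p.2}

lemma IsCoarse.diag_mem [Nonempty X] (h : IsCoarse 𝓔) : diagRel X ∈ 𝓔 := by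
  obtain ⟨x⟩ := ‹Nonempty X›
  obtain ⟨s, hs, -⟩ := h.cover (x, x)
  exact h.subrel s hs _ (fun y => rfl) (fun p hp => by
    have : p = (p.1, p.2) := rfl
    rw [this, hp]; exact h.refl s hs p.2)

lemma IsCoarse.union_mem (h : IsCoarse 𝓔) {s t : Set (X × X)} (hs : s ∈ 𝓔) (ht : t ∈ 𝓔) :
    s ∪ t ∈ 𝓔 := by
  refine h.subrel _ (h.comp s hs t ht) _ (fun x => Or.inl (h.refl s hs x)) ?_
  rintro ⟨a, b⟩ (hab | hab)
  · exact ⟨b, hab, h.refl t ht b⟩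
  · exact ⟨a, h.refl s hs a, hab⟩

lemma IsCoarse.biUnion_mem [Nonempty X] (h : IsCoarse 𝓔) {ι : Type*} (F : Finset ι)
    (f : ι → Set (X × X)) (hf : ∀ i ∈ F, f i ∈ 𝓔) :
    diagRel X ∪ (⋃ i ∈ F, f i) ∈ 𝓔 := by
  classical
  induction F using Finset.induction with
  | empty => simpa using h.diag_mem
  | @insert a F ha ih =>
    have : diagRel X ∪ (⋃ i ∈ insert a F, f i)
        = (diagRel X ∪ f a) ∪ (diagRel X ∪ ⋃ i ∈ F, f i) := by
      rw [Finset.set_biUnion_insert, Set.union_union_distrib_left]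
    rw [this]
    have hfa : diagRel X ∪ f a ∈ 𝓔 := by
      have hsub : diagRel X ∪ f a ⊆ f a := by
        rintro ⟨x, y⟩ (hxy | hxy)
        · cases hxy; exact h.refl _ (hf a (Finset.mem_insert_self a F)) _
        · exact hxy
      exact h.subrel _ (hf a (Finset.mem_insert_self a F)) _
        (fun x => Or.inl rfl) hsub
    exact h.union_mem hfa (ih (fun i hi => hf i (Finset.mem_insert_of_mem hi)))

lemma IsCoarse.square_mem [Nonempty X] (h : IsCoarse 𝓔) (F : Set X) (hF : F.Finite) :
    ∃ s ∈ 𝓔, ∀ a ∈ F, ∀ b ∈ F, (a, b) ∈ s := by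
  classical
  have hFF : (F ×ˢ F).Finite := hF.prod hF
  refine ⟨diagRel X ∪ ⋃ p ∈ hFF.toFinset, (h.cover p).choose,
    h.biUnion_mem hFF.toFinset _ (fun p _ => (h.cover p).choose_spec.1), ?_⟩
  intro a ha b hb
  refine Or.inr ?_
  simp only [Set.mem_iUnion]
  exact ⟨(a, b), (Set.Finite.mem_toFinset hFF).mpr (Set.mk_mem_prod ha hb),
    (h.cover (a, b)).choose_spec.2⟩

lemma compatible_of_finite_supp [Nonempty X] (h : IsCoarse 𝓔) (f : Equiv.Perm X)
    (hf : (psupp f).Finite) : Compatible 𝓔 f := by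
  have hF : (psupp f ∪ f '' psupp f).Finite := hf.union (hf.image f)
  obtain ⟨s, hs, hsq⟩ := h.square_mem _ hF
  refine ⟨s, hs, fun x => ?_⟩
  by_cases hx : f x = x
  · rw [hx]; exact h.refl s hs x
  · exact hsq x (Or.inl hx) (f x) (Or.inr ⟨x, hx, rfl⟩)

lemma Compatible.mul (h : IsCoarse 𝓔) {f g : Equiv.Perm X}
    (hf : Compatible 𝓔 f) (hg : Compatible 𝓔 g) : Compatible 𝓔 (f * g) := by
  obtain ⟨s, hs, hfs⟩ := hf
  obtain ⟨t, ht, hgt⟩ := hg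
  refine ⟨relComp t s, h.comp t ht s hs, fun x => ⟨g x, hgt x, hfs (g x)⟩⟩

lemma Compatible.inv (h : IsCoarse 𝓔) {f : Equiv.Perm X}
    (hf : Compatible 𝓔 f) : Compatible 𝓔 f⁻¹ := by
  obtain ⟨s, hs, hfs⟩ := hf
  refine ⟨relInv s, h.inv s hs, fun x => ?_⟩
  have := hfs (f⁻¹ x)
  simpa [relInv] using this

lemma Compatible.conj (h : IsCoarse 𝓔) (hAll : ∀ f : Equiv.Perm X, IsAsymorphism 𝓔 f)
    {g : Equiv.Perm X} (u : Equiv.Perm X) (hg : Compatible 𝓔 g) :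
    Compatible 𝓔 (u * g * u⁻¹) := by
  obtain ⟨s, hs, hgs⟩ := hg
  obtain ⟨t, ht, hmap⟩ := (hAll u).1 s hs
  refine ⟨t, ht, fun x => ?_⟩
  have := hmap (u⁻¹ x) (g (u⁻¹ x)) (hgs (u⁻¹ x))
  simpa using this

end Helpers
section Greedy

/-- Greedy coloring: a symmetric irreflexive graph with degrees `< N` admits a proper
`N`-coloring. -/
lemma exists_greedy_coloring {V : Type*} (adj : V → V → Prop)
    (hsym : ∀ a b, adj a b → adj b a) (hirr : ∀ a, ¬ adj a a) (N : ℕ)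
    (hdeg : ∀ v, {w | adj v w}.Finite ∧ {w | adj v w}.ncard < N) :
    ∃ c : V → Fin N, ∀ a b, adj a b → c a ≠ c b := by
  classical
  by_cases hV : Nonempty V
  case neg => exact ⟨fun v => absurd ⟨v⟩ hV, fun a => absurd ⟨a⟩ hV⟩
  obtain ⟨v0⟩ := hV
  have hN : 0 < N := Nat.lt_of_le_of_lt (Nat.zero_le _) (hdeg v0).2
  set r := @WellOrderingRel V with hr
  have wf : WellFounded r := (WellOrderingRel.isWellOrder).wf
  -- key existence of an unused color
  have key : ∀ (v : V) (ih : ∀ w, r w v → Fin N),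
      ∃ k : Fin N, k ∉ (fun w => if h : r w v then ih w h else ⟨0, hN⟩) ''
        {w | adj v w ∧ r w v} := by
    intro v ih
    set f : V → Fin N := fun w => if h : r w v then ih w h else ⟨0, hN⟩
    have h1 : {w | adj v w ∧ r w v} ⊆ {w | adj v w} := fun w hw => hw.1
    have hfin : {w | adj v w ∧ r w v}.Finite := (hdeg v).1.subset h1
    have h2 : (f '' {w | adj v w ∧ r w v}).ncard < N := by
      calc (f '' {w | adj v w ∧ r w v}).ncard ≤ {w | adj v w ∧ r w v}.ncard :=
            Set.ncard_image_le hfin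
        _ ≤ {w | adj v w}.ncard := Set.ncard_le_ncard h1 (hdeg v).1
        _ < N := (hdeg v).2
    by_contra hcon
    push_neg at hcon
    have : (Set.univ : Set (Fin N)) ⊆ f '' {w | adj v w ∧ r w v} := fun k _ => hcon k
    have := Set.ncard_le_ncard this (hfin.image f)
    rw [Set.ncard_univ] at this
    simp [Nat.card_eq_fintype_card] at this
    omega
  set c : V → Fin N := wf.fix (fun v ih => (key v ih).choose) with hc
  have hceq : ∀ v, c v = (key v (fun w _ => c w)).choose := fun v =>
    WellFounded.fix_eq wf _ v
  have spec : ∀ a b, adj a b → r b a → c a ≠ c b := by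
    intro a b hab hba hch
    have h1 := (key a (fun w _ => c w)).choose_spec
    rw [← hceq a] at h1
    refine h1 ⟨b, ⟨hab, hba⟩, ?_⟩
    show (if h : r b a then c b else ⟨0, hN⟩) = c a
    rw [dif_pos hba, ← hch]
  refine ⟨c, fun a b hab => ?_⟩
  rcases trichotomous_of (@WellOrderingRel V) a b with h | h | h
  · exact (spec b a (hsym a b hab) h).symm
  · exact absurd (h ▸ hab) (hirr b)
  · exact spec a b hab h

end Greedy
section Pairing

variable {X : Type*}

/-- `p` is an involution whose "transpositions" are `{x, p x}` for `x ∈ L`, with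
`L` a transversal of the 2-point orbits. -/
structure IsPairing (p : Equiv.Perm X) (L : Set X) : Prop where
  invol : ∀ x, p (p x) = x
  not_mem : ∀ x ∈ L, p x ∉ L
  moved : ∀ x ∈ L, p x ≠ x
  cover : ∀ x, p x ≠ x → x ∈ L ∨ p x ∈ L

lemma IsPairing.psupp_eq {p : Equiv.Perm X} {L : Set X} (h : IsPairing p L) :
    psupp p = L ∪ p '' L := by
  ext x
  constructor
  · intro hx
    rcases h.cover x hx with h1 | h1
    · exact Or.inl h1
    · exact Or.inr ⟨p x, h1, h.invol x⟩
  · rintro (hx | ⟨y, hy, rfl⟩)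
    · exact h.moved x hx
    · intro hpy
      have h1 : p (p y) = y := h.invol y
      rw [hpy] at h1
      exact h.moved y hy (h1 ▸ hpy)

lemma IsPairing.fix_eq {p : Equiv.Perm X} {L : Set X} (h : IsPairing p L) :
    {x | p x = x} = (L ∪ p '' L)ᶜ := by
  rw [← h.psupp_eq]
  ext x
  simp [psupp]

lemma IsPairing.inv_eq {p : Equiv.Perm X} {L : Set X} (h : IsPairing p L) : p⁻¹ = p := by
  ext x
  have := h.invol x
  exact p.injective (by simp [this])

/-- Every infinite set is the support of some pairing with a transversal of full
cardinality. -/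
lemma exists_pairing (S : Set X) (hS : S.Infinite) :
    ∃ (p : Equiv.Perm X) (L : Set X), IsPairing p L ∧ psupp p = S ∧ L ⊆ S ∧
      Cardinal.mk ↥L = Cardinal.mk ↥S := by
  classical
  have hSi : Infinite ↥S := hS.to_subtype
  have hadd : Cardinal.mk ↥S + Cardinal.mk ↥S = Cardinal.mk ↥S :=
    Cardinal.add_eq_self (Cardinal.aleph0_le_mk ↥S)
  have hmk : Cardinal.mk (↥S ⊕ ↥S) = Cardinal.mk ↥S := by
    simp only [Cardinal.mk_sum, Cardinal.lift_id]
    exact hadd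
  obtain ⟨E0⟩ := Cardinal.eq.mp hmk
  set E : ↥S ≃ ↥S ⊕ ↥S := E0.symm with hE
  set e : Equiv.Perm ↥S := E.trans ((Equiv.sumComm ↥S ↥S).trans E.symm) with he
  have heE : ∀ a, E (e a) = (Equiv.sumComm ↥S ↥S) (E a) := by
    intro a; simp [he]
  have he2 : ∀ a, e (e a) = a := by
    intro a
    apply E.injective
    rw [heE, heE]
    rcases hEa : E a with u | u <;> simp
  have hefpf : ∀ a, e a ≠ a := by
    intro a hc
    have := heE a
    rw [hc] at this
    rcases hEa : E a with u | u <;> rw [hEa] at this <;> simp at this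
  set p : Equiv.Perm X := Equiv.Perm.ofSubtype e with hp
  have hpmem : ∀ (x : X) (hx : x ∈ S), p x = ↑(e ⟨x, hx⟩) := by
    intro x hx; exact Equiv.Perm.ofSubtype_apply_of_mem e hx
  have hpnot : ∀ (x : X), x ∉ S → p x = x := by
    intro x hx; exact Equiv.Perm.ofSubtype_apply_of_not_mem e hx
  set L : Set X := Subtype.val '' (⇑E ⁻¹' (Set.range Sum.inl)) with hL
  have hmemL : ∀ x : X, x ∈ L ↔ ∃ (hx : x ∈ S), E ⟨x, hx⟩ ∈ Set.range Sum.inl := by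
    intro x
    constructor
    · rintro ⟨a, ha, rfl⟩
      exact ⟨a.2, by simpa using ha⟩
    · rintro ⟨hx, h⟩
      exact ⟨⟨x, hx⟩, h, rfl⟩
  have hLS : L ⊆ S := by
    rintro x ⟨a, _, rfl⟩; exact a.2
  have hpair : IsPairing p L := by
    constructor
    · intro x
      by_cases hx : x ∈ S
      · rw [hpmem x hx]
        have h2 : (↑(e ⟨x, hx⟩) : X) ∈ S := (e ⟨x, hx⟩).2
        rw [hpmem _ h2]
        have : (⟨↑(e ⟨x, hx⟩), h2⟩ : ↥S) = e ⟨x, hx⟩ := Subtype.ext rfl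
        rw [this, he2]
      · rw [hpnot x hx, hpnot x hx]
    · intro x hx hpx
      rw [hmemL] at hx hpx
      obtain ⟨hxS, hleft⟩ := hx
      obtain ⟨hpxS, hpleft⟩ := hpx
      have h2 : p x = ↑(e ⟨x, hxS⟩) := hpmem x hxS
      have h3 : (⟨p x, hpxS⟩ : ↥S) = e ⟨x, hxS⟩ := Subtype.ext h2
      rw [h3, heE] at hpleft
      obtain ⟨u, hu⟩ := hleft
      rw [← hu] at hpleft
      simp at hpleft
    · intro x hx
      rw [hmemL] at hx
      obtain ⟨hxS, -⟩ := hx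
      rw [hpmem x hxS]
      intro hc
      exact hefpf ⟨x, hxS⟩ (Subtype.ext hc)
    · intro x hx
      by_cases hxS : x ∈ S
      · rcases hEa : E ⟨x, hxS⟩ with u | u
        · exact Or.inl ((hmemL x).mpr ⟨hxS, ⟨u, hEa.symm⟩⟩)
        · refine Or.inr ((hmemL (p x)).mpr ?_)
          have h2 : p x = ↑(e ⟨x, hxS⟩) := hpmem x hxS
          have h3 : (p x) ∈ S := h2 ▸ (e ⟨x, hxS⟩).2
          refine ⟨h3, ?_⟩
          have h4 : (⟨p x, h3⟩ : ↥S) = e ⟨x, hxS⟩ := Subtype.ext h2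
          rw [h4, heE, hEa]
          simp
      · exact absurd (hpnot x hxS) hx
  refine ⟨p, L, hpair, ?_, hLS, ?_⟩
  · ext x
    constructor
    · intro hx
      by_contra hxS
      exact hx (hpnot x hxS)
    · intro hx
      show p x ≠ x
      rw [hpmem x hx]
      intro hc
      exact hefpf ⟨x, hx⟩ (Subtype.ext hc)
  · rw [hL, Cardinal.mk_image_eq Subtype.val_injective]
    have h1 : ⇑E ⁻¹' (Set.range Sum.inl) = ⇑E.symm '' (Set.range Sum.inl) := by
      rw [Equiv.image_eq_preimage_symm]
      simp
    rw [h1, Cardinal.mk_image_eq E.symm.injective, Cardinal.mk_range_eq _ Sum.inl_injective]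

end Pairing
section Pairing2

variable {X : Type*}

/-- Extract a subset of any prescribed cardinality, keeping the complement full. -/
lemma exists_subset_card (S : Set X) (hS : S.Infinite) (c : Cardinal)
    (hc : c ≤ Cardinal.mk ↥S) :
    ∃ B ⊆ S, Cardinal.mk ↥B = c ∧ Cardinal.mk ↥(S \ B) = Cardinal.mk ↥S := by
  have hSi : Infinite ↥S := hS.to_subtype
  have haleph : Cardinal.aleph0 ≤ Cardinal.mk ↥S := Cardinal.aleph0_le_mk ↥S
  rcases lt_or_eq_of_le hc with hlt | heq
  · obtain ⟨B, hBS, hBc⟩ := Cardinal.le_mk_iff_exists_subset.mp hc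
    refine ⟨B, hBS, hBc, ?_⟩
    have hd : Disjoint B (S \ B) := Set.disjoint_sdiff_right
    have hu : B ∪ (S \ B) = S := Set.union_diff_cancel hBS
    have hsum : Cardinal.mk ↥B + Cardinal.mk ↥(S \ B) = Cardinal.mk ↥S := by
      rw [← Cardinal.mk_union_of_disjoint hd, hu]
    have h1 : Cardinal.mk ↥(S \ B) ≤ Cardinal.mk ↥S :=
      Cardinal.mk_le_mk_of_subset Set.diff_subset
    by_contra hne
    have h2 : Cardinal.mk ↥(S \ B) < Cardinal.mk ↥S := lt_of_le_of_ne h1 hne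
    have h3 := Cardinal.add_lt_of_lt haleph (hBc ▸ hlt) h2
    rw [hsum] at h3
    exact lt_irrefl _ h3
  · obtain ⟨p, L, hp, hsupp, hLS, hLc⟩ := exists_pairing S hS
    refine ⟨L, hLS, hLc.trans heq.symm, ?_⟩
    have hsub : p '' L ⊆ S \ L := by
      rintro y ⟨x, hx, rfl⟩
      refine ⟨?_, hp.not_mem x hx⟩
      rw [← hsupp]
      show p (p x) ≠ p x
      rw [hp.invol x]
      exact fun hc' => hp.moved x hx hc'.symm
    have h1 : Cardinal.mk ↥(p '' L) ≤ Cardinal.mk ↥(S \ L) :=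
      Cardinal.mk_le_mk_of_subset hsub
    rw [Cardinal.mk_image_eq p.injective] at h1
    exact le_antisymm (Cardinal.mk_le_mk_of_subset Set.diff_subset) (hLc ▸ h1)

open Classical in
/-- The function swapping `x` and `g x` for `x ∈ B`. -/
noncomputable def swapFun (g : Equiv.Perm X) (B : Set X) : X → X := fun x =>
  if x ∈ B then g x else if g⁻¹ x ∈ B then g⁻¹ x else x

lemma swapFun_involutive (g : Equiv.Perm X) (B : Set X) (h : ∀ x ∈ B, g x ∉ B) :
    Function.Involutive (swapFun g B) := by
  intro x
  unfold swapFun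
  by_cases hx : x ∈ B
  · rw [if_pos hx, if_neg (h x hx)]
    have : g⁻¹ (g x) = x := g.symm_apply_apply x
    rw [if_pos (by rw [this]; exact hx), this]
  · rw [if_neg hx]
    by_cases hx' : g⁻¹ x ∈ B
    · rw [if_pos hx', if_pos hx']
      exact g.apply_symm_apply x
    · rw [if_neg hx', if_neg hx, if_neg hx']

/-- The permutation swapping `x` and `g x` for all `x ∈ B`. -/
noncomputable def swapInv (g : Equiv.Perm X) (B : Set X) (h : ∀ x ∈ B, g x ∉ B) :
    Equiv.Perm X := (swapFun_involutive g B h).toPerm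

lemma swapInv_apply_mem (g : Equiv.Perm X) (B : Set X) (h : ∀ x ∈ B, g x ∉ B)
    {x : X} (hx : x ∈ B) : swapInv g B h x = g x := by
  show swapFun g B x = g x
  unfold swapFun
  rw [if_pos hx]

lemma swapInv_apply_fix (g : Equiv.Perm X) (B : Set X) (h : ∀ x ∈ B, g x ∉ B)
    {x : X} (hx : x ∉ B) (hx' : g⁻¹ x ∉ B) : swapInv g B h x = x := by
  show swapFun g B x = x
  unfold swapFun
  rw [if_neg hx, if_neg hx']

lemma swapInv_pairing (g : Equiv.Perm X) (B : Set X) (h : ∀ x ∈ B, g x ∉ B)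
    (hB : B ⊆ psupp g) : IsPairing (swapInv g B h) B := by
  constructor
  · exact swapFun_involutive g B h
  · intro x hx
    rw [swapInv_apply_mem g B h hx]
    exact h x hx
  · intro x hx
    rw [swapInv_apply_mem g B h hx]
    exact hB hx
  · intro x hx
    by_cases hxB : x ∈ B
    · exact Or.inl hxB
    · by_cases hx' : g⁻¹ x ∈ B
      · refine Or.inr ?_
        have : swapInv g B h x = g⁻¹ x := by
          show swapFun g B x = g⁻¹ x
          unfold swapFun
          rw [if_neg hxB, if_pos hx']
        rw [this]; exact hx'
      · exact absurd (swapInv_apply_fix g B h hxB hx') hx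

lemma swapInv_psupp (g : Equiv.Perm X) (B : Set X) (h : ∀ x ∈ B, g x ∉ B)
    (hB : B ⊆ psupp g) : psupp (swapInv g B h) = B ∪ g '' B := by
  rw [(swapInv_pairing g B h hB).psupp_eq]
  congr 1
  ext y
  constructor
  · rintro ⟨x, hx, rfl⟩
    exact ⟨x, hx, (swapInv_apply_mem g B h hx).symm⟩
  · rintro ⟨x, hx, rfl⟩
    exact ⟨x, hx, swapInv_apply_mem g B h hx⟩

/-- Product of pairings with disjoint supports is a pairing. -/
lemma IsPairing.mul {p q : Equiv.Perm X} {L M : Set X} (hp : IsPairing p L)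
    (hq : IsPairing q M) (hd : ∀ x, p x ≠ x → q x = x) :
    IsPairing (p * q) (L ∪ M) := by
  have hd' : ∀ x, q x ≠ x → p x = x := by
    intro x hx
    by_contra hpx
    exact hx (hd x hpx)
  have key1 : ∀ x, q x ≠ x → (p * q) x = q x := by
    intro x hx
    have h1 : q (q x) ≠ q x := by rw [hq.invol]; exact fun hc => hx hc.symm
    show p (q x) = q x
    exact hd' (q x) h1
  have key2 : ∀ x, p x ≠ x → (p * q) x = p x := by
    intro x hx
    show p (q x) = p x
    rw [hd x hx]
  have key3 : ∀ x, p x = x → q x = x → (p * q) x = x := by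
    intro x h1 h2
    show p (q x) = x
    rw [h2, h1]
  constructor
  · intro x
    by_cases hqx : q x ≠ x
    · rw [key1 x hqx, key1 (q x) (by rw [hq.invol]; exact fun hc => hqx hc.symm), hq.invol]
    · push_neg at hqx
      by_cases hpx : p x ≠ x
      · rw [key2 x hpx]
        have h1 : p (p x) ≠ p x := by rw [hp.invol]; exact fun hc => hpx hc.symm
        rw [key2 (p x) h1, hp.invol]
      · push_neg at hpx
        rw [key3 x hpx hqx, key3 x hpx hqx]
  · rintro x (hx | hx)
    · have hpx : p x ≠ x := hp.moved x hx
      rw [key2 x hpx]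
      rintro (hc | hc)
      · exact hp.not_mem x hx hc
      · have h1 : p (p x) ≠ p x := by rw [hp.invol]; exact fun hc' => hpx hc'.symm
        exact hq.moved _ hc (hd (p x) h1)
    · have hqx : q x ≠ x := hq.moved x hx
      rw [key1 x hqx]
      rintro (hc | hc)
      · have h1 : q (q x) ≠ q x := by rw [hq.invol]; exact fun hc' => hqx hc'.symm
        exact hp.moved _ hc (hd' (q x) h1)
      · exact hq.not_mem x hx hc
  · rintro x (hx | hx)
    · rw [key2 x (hp.moved x hx)]; exact hp.moved x hx
    · rw [key1 x (hq.moved x hx)]; exact hq.moved x hx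
  · intro x hx
    by_cases hqx : q x ≠ x
    · rcases hq.cover x hqx with h1 | h1
      · exact Or.inl (Or.inr h1)
      · rw [key1 x hqx]; exact Or.inr (Or.inr h1)
    · push_neg at hqx
      by_cases hpx : p x ≠ x
      · rcases hp.cover x hpx with h1 | h1
        · exact Or.inl (Or.inl h1)
        · rw [key2 x hpx]; exact Or.inr (Or.inl h1)
      · push_neg at hpx
        exact absurd (key3 x hpx hqx) hx

lemma IsPairing.mul_fix {p q : Equiv.Perm X} {L M : Set X} (hp : IsPairing p L)
    (hq : IsPairing q M) (hd : ∀ x, p x ≠ x → q x = x) :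
    {x | (p * q) x = x} = {x | p x = x} ∩ {x | q x = x} := by
  ext x
  simp only [Set.mem_setOf_eq, Set.mem_inter_iff]
  constructor
  · intro h
    by_cases hqx : q x = x
    · refine ⟨?_, hqx⟩
      have : p (q x) = x := h
      rwa [hqx] at this
    · exfalso
      have h1 : q (q x) ≠ q x := by rw [hq.invol]; exact fun hc => hqx hc.symm
      have h2 : p x = x := by
        by_contra hpx
        exact hqx (hd x hpx)
      have : p (q x) = q x := by
        by_contra hc
        have := hd (q x) hc
        exact h1 (by rw [this])
      rw [show ((p*q) x = p (q x)) from rfl, this] at h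
      exact hqx h
  · rintro ⟨h1, h2⟩
    show p (q x) = x
    rw [h2, h1]

end Pairing2
section Conj

variable {X : Type*}

/-- Two pairings with equinumerous transversals and equinumerous fixed-point sets are
conjugate. -/
lemma IsPairing.exists_conj {p q : Equiv.Perm X} {L M : Set X}
    (hp : IsPairing p L) (hq : IsPairing q M)
    (h1 : Cardinal.mk ↥L = Cardinal.mk ↥M)
    (h2 : Cardinal.mk ↥{x | p x = x} = Cardinal.mk ↥{x | q x = x}) :
    ∃ u : Equiv.Perm X, q = u * p * u⁻¹ := by
  classical
  obtain ⟨β⟩ := Cardinal.eq.mp h1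
  obtain ⟨γ⟩ := Cardinal.eq.mp h2
  have hfixp : ∀ x, x ∉ L → p x ∉ L → p x = x := by
    intro x hx hx'
    by_contra hne
    rcases hp.cover x hne with h | h
    exacts [hx h, hx' h]
  have hfixq : ∀ y, y ∉ M → q y ∉ M → q y = y := by
    intro y hy hy'
    by_contra hne
    rcases hq.cover y hne with h | h
    exacts [hy h, hy' h]
  set fu : X → X := fun x =>
    if hx : x ∈ L then (β ⟨x, hx⟩ : X)
    else if hx' : p x ∈ L then q (β ⟨p x, hx'⟩)
    else (γ ⟨x, hfixp x hx hx'⟩ : X) with hfu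
  set gu : X → X := fun y =>
    if hy : y ∈ M then (β.symm ⟨y, hy⟩ : X)
    else if hy' : q y ∈ M then p (β.symm ⟨q y, hy'⟩)
    else (γ.symm ⟨y, hfixq y hy hy'⟩ : X) with hgu
  have hfu1 : ∀ (x : X) (hx : x ∈ L), fu x = (β ⟨x, hx⟩ : X) := fun x hx => dif_pos hx
  have hfu2 : ∀ (x : X) (hx : x ∉ L) (hx' : p x ∈ L), fu x = q (β ⟨p x, hx'⟩) :=
    fun x hx hx' => (dif_neg hx).trans (dif_pos hx')
  have hfu3 : ∀ (x : X) (hx : x ∉ L) (hx' : p x ∉ L),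
      fu x = (γ ⟨x, hfixp x hx hx'⟩ : X) := fun x hx hx' => (dif_neg hx).trans (dif_neg hx')
  have hgu1 : ∀ (y : X) (hy : y ∈ M), gu y = (β.symm ⟨y, hy⟩ : X) := fun y hy => dif_pos hy
  have hgu2 : ∀ (y : X) (hy : y ∉ M) (hy' : q y ∈ M), gu y = p (β.symm ⟨q y, hy'⟩) :=
    fun y hy hy' => (dif_neg hy).trans (dif_pos hy')
  have hgu3 : ∀ (y : X) (hy : y ∉ M) (hy' : q y ∉ M),
      gu y = (γ.symm ⟨y, hfixq y hy hy'⟩ : X) := fun y hy hy' => (dif_neg hy).trans (dif_neg hy')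
  -- useful membership facts
  have hβM : ∀ a : ↥L, (β a : X) ∈ M := fun a => (β a).2
  have hβL : ∀ b : ↥M, (β.symm b : X) ∈ L := fun b => (β.symm b).2
  have hγfix : ∀ a : ↥{x | p x = x}, q (γ a : X) = (γ a : X) := fun a => (γ a).2
  have hγfix' : ∀ b : ↥{x | q x = x}, p (γ.symm b : X) = (γ.symm b : X) := fun b => (γ.symm b).2
  have hMmoved : ∀ y ∈ M, q y ≠ y := hq.moved
  have hLmoved : ∀ x ∈ L, p x ≠ x := hp.moved
  have hleft : ∀ x, gu (fu x) = x := by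
    intro x
    by_cases hx : x ∈ L
    · rw [hfu1 x hx, hgu1 _ (hβM ⟨x, hx⟩)]
      have : (⟨(β ⟨x, hx⟩ : X), hβM ⟨x, hx⟩⟩ : ↥M) = β ⟨x, hx⟩ := Subtype.ext rfl
      rw [this, Equiv.symm_apply_apply]
    · by_cases hx' : p x ∈ L
      · rw [hfu2 x hx hx']
        set b : ↥M := β ⟨p x, hx'⟩
        have hb1 : q (b : X) ∉ M := hq.not_mem _ (hβM ⟨p x, hx'⟩)
        have hb2 : q (q (b : X)) = (b : X) := hq.invol _
        have hb3 : q (q (b : X)) ∈ M := by rw [hb2]; exact hβM ⟨p x, hx'⟩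
        rw [hgu2 _ hb1 hb3]
        have : (⟨q (q (b : X)), hb3⟩ : ↥M) = b := Subtype.ext hb2
        rw [this, Equiv.symm_apply_apply, hp.invol]
      · rw [hfu3 x hx hx']
        set a : ↥{x | p x = x} := ⟨x, hfixp x hx hx'⟩
        have hg1 : (γ a : X) ∉ M := fun hc => hMmoved _ hc (hγfix a)
        have hg2 : q (γ a : X) ∉ M := by rw [hγfix a]; exact hg1
        rw [hgu3 _ hg1 hg2]
        have : (⟨(γ a : X), hfixq _ hg1 hg2⟩ : ↥{x | q x = x}) = γ a := Subtype.ext rfl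
        rw [this, Equiv.symm_apply_apply]
  have hright : ∀ y, fu (gu y) = y := by
    intro y
    by_cases hy : y ∈ M
    · rw [hgu1 y hy, hfu1 _ (hβL ⟨y, hy⟩)]
      have : (⟨(β.symm ⟨y, hy⟩ : X), hβL ⟨y, hy⟩⟩ : ↥L) = β.symm ⟨y, hy⟩ := Subtype.ext rfl
      rw [this, Equiv.apply_symm_apply]
    · by_cases hy' : q y ∈ M
      · rw [hgu2 y hy hy']
        set a : ↥L := β.symm ⟨q y, hy'⟩
        have ha1 : p (a : X) ∉ L := hp.not_mem _ (hβL ⟨q y, hy'⟩)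
        have ha2 : p (p (a : X)) = (a : X) := hp.invol _
        have ha3 : p (p (a : X)) ∈ L := by rw [ha2]; exact hβL ⟨q y, hy'⟩
        rw [hfu2 _ ha1 ha3]
        have : (⟨p (p (a : X)), ha3⟩ : ↥L) = a := Subtype.ext ha2
        rw [this, Equiv.apply_symm_apply, hq.invol]
      · rw [hgu3 y hy hy']
        set b : ↥{x | q x = x} := ⟨y, hfixq y hy hy'⟩
        have hg1 : (γ.symm b : X) ∉ L := fun hc => hLmoved _ hc (hγfix' b)
        have hg2 : p (γ.symm b : X) ∉ L := by rw [hγfix' b]; exact hg1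
        rw [hfu3 _ hg1 hg2]
        have : (⟨(γ.symm b : X), hfixp _ hg1 hg2⟩ : ↥{x | p x = x}) = γ.symm b :=
          Subtype.ext rfl
        rw [this, Equiv.apply_symm_apply]
  set u : Equiv.Perm X := ⟨fu, gu, hleft, hright⟩ with hu
  have hucomm : ∀ y, q (u y) = u (p y) := by
    intro y
    show q (fu y) = fu (p y)
    by_cases hy : y ∈ L
    · rw [hfu1 y hy]
      have h3 : p y ∉ L := hp.not_mem y hy
      have h4 : p (p y) ∈ L := by rw [hp.invol]; exact hy
      rw [hfu2 _ h3 h4]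
      have : (⟨p (p y), h4⟩ : ↥L) = ⟨y, hy⟩ := Subtype.ext (hp.invol y)
      rw [this]
    · by_cases hy' : p y ∈ L
      · rw [hfu2 y hy hy', hfu1 _ hy', hq.invol]
      · rw [hfu3 y hy hy']
        have hfix : p y = y := hfixp y hy hy'
        rw [hfix, hfu3 y hy hy']
        exact hγfix _
  refine ⟨u, ?_⟩
  ext x
  have := hucomm (u⁻¹ x)
  simp only [Equiv.Perm.mul_apply]
  rw [← hucomm (u⁻¹ x)]
  simp

end Conj
section Applications

variable {X : Type*}

/-- The support of any permutation splits into three classes, each moved off itself. -/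
lemma exists_three_classes (g : Equiv.Perm X) :
    ∃ A : Fin 3 → Set X, psupp g = (⋃ i, A i) ∧
      ∀ i, A i ⊆ psupp g ∧ ∀ x ∈ A i, g x ∉ A i := by
  classical
  set adj : X → X → Prop := fun x y => x ≠ y ∧ (y = g x ∨ x = g y) with hadj
  have hsym : ∀ a b, adj a b → adj b a := by
    rintro a b ⟨h1, h2 | h2⟩
    · exact ⟨h1.symm, Or.inr h2⟩
    · exact ⟨h1.symm, Or.inl h2⟩
  have hirr : ∀ a, ¬ adj a a := by rintro a ⟨h1, -⟩; exact h1 rfl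
  have hdeg : ∀ v, {w | adj v w}.Finite ∧ {w | adj v w}.ncard < 3 := by
    intro v
    have hsub : {w | adj v w} ⊆ {g v, g⁻¹ v} := by
      rintro w ⟨h1, h2 | h2⟩
      · exact Or.inl h2
      · refine Or.inr ?_
        show w = g⁻¹ v
        rw [h2]
        simp
    have hfin : {w | adj v w}.Finite :=
      ((Set.finite_singleton (g⁻¹ v)).insert (g v)).subset hsub
    refine ⟨hfin, ?_⟩
    have h1 : {w | adj v w}.ncard ≤ ({g v, g⁻¹ v} : Set X).ncard :=
      Set.ncard_le_ncard hsub ((Set.finite_singleton (g⁻¹ v)).insert (g v))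
    have h2 : ({g v, g⁻¹ v} : Set X).ncard ≤ 2 := by
      refine le_trans (Set.ncard_insert_le _ _) ?_
      simp
    omega
  obtain ⟨c, hcol⟩ := exists_greedy_coloring adj hsym hirr 3 hdeg
  refine ⟨fun i => {x | x ∈ psupp g ∧ c x = i}, ?_, ?_⟩
  · ext x
    simp only [Set.mem_iUnion, Set.mem_setOf_eq]
    exact ⟨fun hx => ⟨c x, hx, rfl⟩, fun ⟨i, hi, _⟩ => hi⟩
  · intro i
    refine ⟨fun x hx => hx.1, ?_⟩
    rintro x ⟨hx1, hx2⟩ ⟨hg1, hg2⟩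
    have hne : x ≠ g x := fun hc => hx1 hc.symm
    exact hcol x (g x) ⟨hne, Or.inl rfl⟩ (by rw [hx2, hg2])

/-- Decomposition of a symmetric reflexive finitary entourage into the identity and
finitely many partial matchings, realized by permutations. -/
lemma exists_involutions_cover (s : Set (X × X))
    (hsymm : ∀ p ∈ s, (p.2, p.1) ∈ s) (hrefl : ∀ x : X, (x, x) ∈ s) (n : ℕ)
    (hb : ∀ x : X, (ball s x).Finite ∧ (ball s x).ncard < n) :
    ∃ (k : ℕ) (ι : Fin k → Equiv.Perm X),
      (∀ i, ∀ x, (x, ι i x) ∈ s) ∧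
      (∀ p ∈ s, p.1 = p.2 ∨ ∃ i, (ι i) p.1 = p.2) := by
  classical
  set adj : X × X → X × X → Prop := fun p q =>
    (p ∈ s ∧ p.1 ≠ p.2) ∧ (q ∈ s ∧ q.1 ≠ q.2) ∧ p ≠ q ∧
      (p.1 = q.1 ∨ p.1 = q.2 ∨ p.2 = q.1 ∨ p.2 = q.2) with hadj
  have hsym : ∀ a b, adj a b → adj b a := by
    rintro a b ⟨h1, h2, h3, h4⟩
    refine ⟨h2, h1, h3.symm, ?_⟩
    tauto
  have hirr : ∀ a, ¬ adj a a := by rintro a ⟨-, -, h3, -⟩; exact h3 rfl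
  have hdeg : ∀ p, {q | adj p q}.Finite ∧ {q | adj p q}.ncard < 4 * n + 1 := by
    intro p
    by_cases hp : p ∈ s ∧ p.1 ≠ p.2
    · set S1 : Set (X × X) := (fun y => (p.1, y)) '' ball s p.1
      set S2 : Set (X × X) := (fun y => (y, p.1)) '' ball s p.1
      set S3 : Set (X × X) := (fun y => (p.2, y)) '' ball s p.2
      set S4 : Set (X × X) := (fun y => (y, p.2)) '' ball s p.2
      have hsub : {q | adj p q} ⊆ S1 ∪ S2 ∪ S3 ∪ S4 := by
        rintro ⟨a, b⟩ ⟨-, ⟨hqs, -⟩, -, hsh⟩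
        have hqs' : (b, a) ∈ s := hsymm (a, b) hqs
        rcases hsh with h | h | h | h
        · refine Or.inl (Or.inl (Or.inl ⟨b, ?_, ?_⟩))
          · show (p.1, b) ∈ s
            rw [h]; exact hqs
          · show (p.1, b) = (a, b)
            rw [h]
        · refine Or.inl (Or.inl (Or.inr ⟨a, ?_, ?_⟩))
          · show (p.1, a) ∈ s
            rw [h]; exact hqs'
          · show (a, p.1) = (a, b)
            rw [h]
        · refine Or.inl (Or.inr ⟨b, ?_, ?_⟩)
          · show (p.2, b) ∈ s
            rw [h]; exact hqs
          · show (p.2, b) = (a, b)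
            rw [h]
        · refine Or.inr ⟨a, ?_, ?_⟩
          · show (p.2, a) ∈ s
            rw [h]; exact hqs'
          · show (a, p.2) = (a, b)
            rw [h]
      have hf1 : S1.Finite := ((hb p.1).1).image _
      have hf2 : S2.Finite := ((hb p.1).1).image _
      have hf3 : S3.Finite := ((hb p.2).1).image _
      have hf4 : S4.Finite := ((hb p.2).1).image _
      have hfin : {q | adj p q}.Finite := (((hf1.union hf2).union hf3).union hf4).subset hsub
      refine ⟨hfin, ?_⟩
      have hc1 : S1.ncard < n := lt_of_le_of_lt (Set.ncard_image_le (hb p.1).1) (hb p.1).2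
      have hc2 : S2.ncard < n := lt_of_le_of_lt (Set.ncard_image_le (hb p.1).1) (hb p.1).2
      have hc3 : S3.ncard < n := lt_of_le_of_lt (Set.ncard_image_le (hb p.2).1) (hb p.2).2
      have hc4 : S4.ncard < n := lt_of_le_of_lt (Set.ncard_image_le (hb p.2).1) (hb p.2).2
      have htot : {q | adj p q}.ncard ≤ (S1 ∪ S2 ∪ S3 ∪ S4).ncard :=
        Set.ncard_le_ncard hsub (((hf1.union hf2).union hf3).union hf4)
      have hu1 := Set.ncard_union_le (S1 ∪ S2 ∪ S3) S4
      have hu2 := Set.ncard_union_le (S1 ∪ S2) S3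
      have hu3 := Set.ncard_union_le S1 S2
      omega
    · have : {q | adj p q} = ∅ := by
        ext q
        simp only [Set.mem_setOf_eq, Set.mem_empty_iff_false, iff_false]
        rintro ⟨h1, -⟩
        exact hp h1
      rw [this]
      simp
  obtain ⟨c, hcol⟩ := exists_greedy_coloring adj hsym hirr (4 * n + 1) hdeg
  set P : Fin (4 * n + 1) → Set (X × X) := fun i => {p | (p ∈ s ∧ p.1 ≠ p.2) ∧ c p = i}
    with hP
  -- matching properties
  have hmatch : ∀ i, ∀ p ∈ P i, ∀ q ∈ P i, p ≠ q →
      p.1 ≠ q.1 ∧ p.1 ≠ q.2 ∧ p.2 ≠ q.1 ∧ p.2 ≠ q.2 := by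
    intro i p hp q hq hne
    by_contra hcon
    push_neg at hcon
    have hshare : p.1 = q.1 ∨ p.1 = q.2 ∨ p.2 = q.1 ∨ p.2 = q.2 := by tauto
    exact hcol p q ⟨hp.1, hq.1, hne, hshare⟩ (by rw [hp.2, hq.2])
  have U1 : ∀ i x y y', (x, y) ∈ P i → (x, y') ∈ P i → y = y' := by
    intro i x y y' h1 h2
    by_contra hne
    have := (hmatch i _ h1 _ h2 (by simp [hne])).1
    simp at this
  have U2 : ∀ i x y z, (x, y) ∈ P i → (z, x) ∈ P i → False := by
    intro i x y z h1 h2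
    by_cases he : (x, y) = (z, x)
    · rw [Prod.mk.injEq] at he
      exact h1.1.2 he.2.symm
    · exact (hmatch i _ h1 _ h2 he).2.1 rfl
  have U3 : ∀ i x z y, (x, y) ∈ P i → (z, y) ∈ P i → x = z := by
    intro i x z y h1 h2
    by_contra hne
    have := (hmatch i _ h1 _ h2 (by simp [hne])).2.2.2
    simp at this
  -- involutions
  have hinv : ∀ i : Fin (4 * n + 1), ∃ f : Equiv.Perm X,
      (∀ x, (x, f x) ∈ s) ∧ (∀ x y, (x, y) ∈ P i → f x = y) := by
    intro i
    set F : X → X := fun x =>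
      if hx : ∃ y, (x, y) ∈ P i then hx.choose
      else if hx' : ∃ y, (y, x) ∈ P i then hx'.choose
      else x with hF
    have hF1 : ∀ x (hx : ∃ y, (x, y) ∈ P i), F x = hx.choose := fun x hx => dif_pos hx
    have hF2 : ∀ x (hx : ¬ ∃ y, (x, y) ∈ P i) (hx' : ∃ y, (y, x) ∈ P i),
        F x = hx'.choose := fun x hx hx' => (dif_neg hx).trans (dif_pos hx')
    have hF3 : ∀ x (hx : ¬ ∃ y, (x, y) ∈ P i) (hx' : ¬ ∃ y, (y, x) ∈ P i), F x = x :=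
      fun x hx hx' => (dif_neg hx).trans (dif_neg hx')
    have hFinv : Function.Involutive F := by
      intro x
      by_cases hx : ∃ y, (x, y) ∈ P i
      · rw [hF1 x hx]
        set y := hx.choose with hy
        have hxy : (x, y) ∈ P i := hx.choose_spec
        have hnex : ¬ ∃ w, (y, w) ∈ P i := by
          rintro ⟨w, hw⟩
          exact U2 i y w x hw hxy
        have hex' : ∃ w, (w, y) ∈ P i := ⟨x, hxy⟩
        rw [hF2 y hnex hex']
        exact (U3 i hex'.choose x y hex'.choose_spec hxy)
      · by_cases hx' : ∃ y, (y, x) ∈ P i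
        · rw [hF2 x hx hx']
          set z := hx'.choose with hz
          have hzx : (z, x) ∈ P i := hx'.choose_spec
          have hez : ∃ w, (z, w) ∈ P i := ⟨x, hzx⟩
          rw [hF1 z hez]
          exact U1 i z hez.choose x hez.choose_spec hzx
        · rw [hF3 x hx hx', hF3 x hx hx']
    refine ⟨hFinv.toPerm, ?_, ?_⟩
    · intro x
      show (x, F x) ∈ s
      by_cases hx : ∃ y, (x, y) ∈ P i
      · rw [hF1 x hx]
        exact hx.choose_spec.1.1
      · by_cases hx' : ∃ y, (y, x) ∈ P i
        · rw [hF2 x hx hx']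
          exact hsymm _ hx'.choose_spec.1.1
        · rw [hF3 x hx hx']
          exact hrefl x
    · intro x y hxy
      show F x = y
      have hx : ∃ w, (x, w) ∈ P i := ⟨y, hxy⟩
      rw [hF1 x hx]
      exact U1 i x hx.choose y hx.choose_spec hxy
  choose ι hι1 hι2 using hinv
  refine ⟨4 * n + 1, ι, hι1, ?_⟩
  intro p hp
  by_cases hne : p.1 = p.2
  · exact Or.inl hne
  · refine Or.inr ⟨c p, hι2 (c p) p.1 p.2 ?_⟩
    exact ⟨⟨(by rwa [show ((p.1, p.2) : X × X) = p from rfl]), hne⟩, rfl⟩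

end Applications
section Step1

lemma card_add_eq {a b : Cardinal} (ha : a ≤ b) (hb : Cardinal.aleph0 ≤ b) : a + b = b :=
  le_antisymm (le_trans (add_le_add_left ha b) (le_of_eq (Cardinal.add_eq_self hb)))
    (self_le_add_left b a)

lemma mk_compl_full {X : Type*} (S W : Set X) (hW : W ⊆ Sᶜ)
    (hle : Cardinal.mk ↥S ≤ Cardinal.mk ↥W) (hinf : Cardinal.aleph0 ≤ Cardinal.mk ↥W) :
    Cardinal.mk ↥(Sᶜ) = Cardinal.mk X := by
  have h1 : Cardinal.mk ↥W ≤ Cardinal.mk ↥(Sᶜ) := Cardinal.mk_le_mk_of_subset hW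
  have h4 := Cardinal.mk_sum_compl S
  rw [card_add_eq (hle.trans h1) (hinf.trans h1)] at h4
  exact h4

lemma fix_eq_compl_psupp {X : Type*} (f : Equiv.Perm X) :
    {x | f x = x} = (psupp f)ᶜ := by
  ext x
  simp [psupp]

lemma exists_base_pairing {X : Type*} [Infinite X] {𝓔 : Set (Set (X × X))}
    (hc : IsCoarse 𝓔) (hAll : ∀ f : Equiv.Perm X, IsAsymorphism 𝓔 f)
    (h0 : Equiv.Perm X) (hh0 : Compatible 𝓔 h0) (ν : Cardinal)
    (hν : Cardinal.aleph0 ≤ ν) (hνh : ν ≤ Cardinal.mk ↥(psupp h0)) :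
    ∃ (j : Equiv.Perm X) (L : Set X), Compatible 𝓔 j ∧ IsPairing j L ∧
      Cardinal.mk ↥L = ν ∧ Cardinal.mk ↥{x | j x = x} = Cardinal.mk X := by
  classical
  obtain ⟨A, hA1, hA2⟩ := exists_three_classes h0
  have hex : ∃ i : Fin 3, ν ≤ Cardinal.mk ↥(A i) := by
    by_contra hcon
    push_neg at hcon
    have hsub : psupp h0 ⊆ A 0 ∪ (A 1 ∪ A 2) := by
      rw [hA1]
      intro x hx
      simp only [Set.mem_iUnion] at hx
      obtain ⟨i, hi⟩ := hx
      fin_cases i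
      · exact Or.inl hi
      · exact Or.inr (Or.inl hi)
      · exact Or.inr (Or.inr hi)
    have h1 : Cardinal.mk ↥(psupp h0) ≤
        Cardinal.mk ↥(A 0) + (Cardinal.mk ↥(A 1) + Cardinal.mk ↥(A 2)) := by
      refine le_trans (Cardinal.mk_le_mk_of_subset hsub) ?_
      refine le_trans (Cardinal.mk_union_le _ _) ?_
      exact add_le_add_right (Cardinal.mk_union_le _ _) _
    have h2 := Cardinal.add_lt_of_lt hν (hcon 1) (hcon 2)
    have h3 := Cardinal.add_lt_of_lt hν (hcon 0) h2
    exact absurd (lt_of_le_of_lt (hνh.trans h1) h3) (lt_irrefl ν)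
  obtain ⟨i, hCν⟩ := hex
  set C := A i with hC
  have hCsupp : C ⊆ psupp h0 := (hA2 i).1
  have hCdisj : ∀ x ∈ C, h0 x ∉ C := (hA2 i).2
  have hCinf : C.Infinite := by
    rw [← Set.infinite_coe_iff]
    exact Cardinal.infinite_iff.mpr (hν.trans hCν)
  obtain ⟨M, hMC, hMν, hMrest⟩ := exists_subset_card C hCinf ν hCν
  have hMinf : M.Infinite := by
    rw [← Set.infinite_coe_iff]
    exact Cardinal.infinite_iff.mpr (hν.trans (le_of_eq hMν.symm))
  obtain ⟨f0, M1, hf0, hf0supp, hM1M, hM1c⟩ := exists_pairing M hMinf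
  have hf0fix : ∀ x, x ∉ M → f0 x = x := by
    intro x hx
    by_contra hne
    exact hx (hf0supp ▸ (hne : x ∈ psupp f0))
  have hf0M : ∀ x ∈ M, f0 x ∈ M := by
    intro x hx
    by_cases hne : f0 (f0 x) = f0 x
    · rw [hf0.invol x] at hne
      rw [← hne]; exact hx
    · exact hf0supp ▸ (hne : f0 x ∈ psupp f0)
  have hdisj2 : ∀ y ∈ h0 '' M, y ∉ M := by
    rintro y ⟨m, hm, rfl⟩ hy
    exact hCdisj m (hMC hm) (hMC hy)
  set j := f0 * h0 * f0⁻¹ * h0⁻¹ with hj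
  have hjcomp : Compatible 𝓔 j :=
    Compatible.mul hc (Compatible.conj hc hAll f0 hh0) (Compatible.inv hc hh0)
  have hjx1 : ∀ x ∈ M, j x = f0 x := by
    intro x hx
    have h1 : h0⁻¹ x ∉ M := fun hcc => (hdisj2 x ⟨h0⁻¹ x, hcc, by simp⟩) hx
    show f0 (h0 (f0⁻¹ (h0⁻¹ x))) = f0 x
    rw [hf0.inv_eq, hf0fix _ h1]
    simp
  have hjx2 : ∀ m ∈ M, j (h0 m) = h0 (f0 m) := by
    intro m hm
    show f0 (h0 (f0⁻¹ (h0⁻¹ (h0 m)))) = _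
    rw [hf0.inv_eq]
    simp only [Equiv.Perm.inv_def, Equiv.symm_apply_apply]
    have h3 : h0 (f0 m) ∉ M := hdisj2 _ ⟨f0 m, hf0M m hm, rfl⟩
    rw [hf0fix _ h3]
  have hjx3 : ∀ x, x ∉ M → x ∉ h0 '' M → j x = x := by
    intro x hx hx'
    have h1 : h0⁻¹ x ∉ M := fun hcc => hx' ⟨h0⁻¹ x, hcc, by simp⟩
    show f0 (h0 (f0⁻¹ (h0⁻¹ x))) = x
    rw [hf0.inv_eq, hf0fix _ h1]
    simp only [Equiv.Perm.inv_def, Equiv.apply_symm_apply]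
    exact hf0fix _ hx
  set L : Set X := M1 ∪ h0 '' M1 with hL
  have himg_sub : h0 '' M1 ⊆ h0 '' M := Set.image_mono hM1M
  have hpair : IsPairing j L := by
    constructor
    · intro x
      by_cases hx : x ∈ M
      · rw [hjx1 x hx, hjx1 _ (hf0M x hx), hf0.invol]
      · by_cases hx' : x ∈ h0 '' M
        · obtain ⟨m, hm, rfl⟩ := hx'
          rw [hjx2 m hm, hjx2 _ (hf0M m hm), hf0.invol]
        · rw [hjx3 x hx hx', hjx3 x hx hx']
    · rintro x (hx | hx)
      · have hxM := hM1M hx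
        rw [hjx1 x hxM]
        rintro (hcc | hcc)
        · exact hf0.not_mem x hx hcc
        · exact hdisj2 (f0 x) (himg_sub hcc) (hf0M x hxM)
      · obtain ⟨m, hm, rfl⟩ := hx
        rw [hjx2 m (hM1M hm)]
        rintro (hcc | hcc)
        · exact hdisj2 _ ⟨f0 m, hf0M m (hM1M hm), rfl⟩ (hM1M hcc)
        · obtain ⟨m', hm', he⟩ := hcc
          have : m' = f0 m := h0.injective he
          rw [this] at hm'
          exact hf0.not_mem m hm hm'
    · rintro x (hx | hx)
      · rw [hjx1 x (hM1M hx)]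
        exact hf0.moved x hx
      · obtain ⟨m, hm, rfl⟩ := hx
        rw [hjx2 m (hM1M hm)]
        exact fun hcc => hf0.moved m hm (h0.injective hcc)
    · intro x hx
      by_cases hxM : x ∈ M
      · rcases hf0.cover x (by rwa [hjx1 x hxM] at hx) with h | h
        · exact Or.inl (Or.inl h)
        · refine Or.inr ?_
          rw [hjx1 x hxM]
          exact Or.inl h
      · by_cases hxI : x ∈ h0 '' M
        · obtain ⟨m, hm, rfl⟩ := hxI
          have hfm : f0 m ≠ m := fun hcc => hx (by rw [hjx2 m hm, hcc])
          rcases hf0.cover m hfm with h | h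
          · exact Or.inl (Or.inr ⟨m, h, rfl⟩)
          · refine Or.inr ?_
            rw [hjx2 m hm]
            exact Or.inr ⟨f0 m, h, rfl⟩
        · exact absurd (hjx3 x hxM hxI) hx
  have hM1card : Cardinal.mk ↥M1 = ν := hM1c.trans hMν
  have hLcard : Cardinal.mk ↥L = ν := by
    have hdisjL : Disjoint M1 (h0 '' M1) := by
      rw [Set.disjoint_left]
      intro x hx1 hx2
      exact hdisj2 x (himg_sub hx2) (hM1M hx1)
    rw [hL, Cardinal.mk_union_of_disjoint hdisjL, Cardinal.mk_image_eq h0.injective,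
      hM1card, Cardinal.add_eq_self hν]
  -- support and fixed points of j
  have hsuppj : psupp j = M ∪ h0 '' M := by
    ext x
    constructor
    · intro hx
      by_contra hcon
      rw [Set.mem_union] at hcon
      push_neg at hcon
      exact hx (hjx3 x hcon.1 hcon.2)
    · rintro (hx | hx)
      · show j x ≠ x
        rw [hjx1 x hx]
        intro hcc
        exact (hf0supp ▸ hx : x ∈ psupp f0) hcc
      · obtain ⟨m, hm, rfl⟩ := hx
        show j (h0 m) ≠ h0 m
        rw [hjx2 m hm]
        intro hcc
        exact (hf0supp ▸ hm : m ∈ psupp f0) (h0.injective hcc)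
  refine ⟨j, L, hjcomp, hpair, hLcard, ?_⟩
  rw [fix_eq_compl_psupp, hsuppj]
  refine mk_compl_full _ (C \ M) ?_ ?_ ?_
  · intro w hw
    simp only [Set.mem_compl_iff, Set.mem_union]
    push_neg
    refine ⟨hw.2, ?_⟩
    rintro ⟨m, hm, rfl⟩
    exact hCdisj m (hMC hm) hw.1
  · refine le_trans (Cardinal.mk_union_le _ _) ?_
    rw [Cardinal.mk_image_eq h0.injective, hMν, Cardinal.add_eq_self hν, hMrest]
    exact hCν
  · rw [hMrest]
    exact hν.trans hCν

end Step1
section Step23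

lemma piece_compatible {X : Type*} [Infinite X] {𝓔 : Set (Set (X × X))}
    (hc : IsCoarse 𝓔) (hAll : ∀ f : Equiv.Perm X, IsAsymorphism 𝓔 f)
    {j : Equiv.Perm X} {Lj : Set X} (hj : IsPairing j Lj) (hjcomp : Compatible 𝓔 j)
    {ν : Cardinal} (hν : Cardinal.aleph0 ≤ ν) (hLj : Cardinal.mk ↥Lj = ν)
    (hfixj : Cardinal.mk ↥{x | j x = x} = Cardinal.mk X)
    (g : Equiv.Perm X) (B : Set X) (hBsupp : B ⊆ psupp g)
    (hBdisj : ∀ x ∈ B, g x ∉ B) (hBle : Cardinal.mk ↥B ≤ ν)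
    (hfixB : Cardinal.mk ↥((B ∪ g '' B)ᶜ) = Cardinal.mk X) :
    Compatible 𝓔 (swapInv g B hBdisj) := by
  classical
  set ι := swapInv g B hBdisj with hι
  have hιpair : IsPairing ι B := swapInv_pairing g B hBdisj hBsupp
  have hιsupp : psupp ι = B ∪ g '' B := swapInv_psupp g B hBdisj hBsupp
  have hιfix : {x | ι x = x} = (B ∪ g '' B)ᶜ := by rw [fix_eq_compl_psupp, hιsupp]
  have hνX : ν ≤ Cardinal.mk X := hLj ▸ Cardinal.mk_set_le Lj
  set Φ : Set X := (B ∪ g '' B)ᶜ with hΦ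
  have hΦinf : Φ.Infinite := by
    rw [← Set.infinite_coe_iff]
    exact Cardinal.infinite_iff.mpr (by rw [hfixB]; exact Cardinal.aleph0_le_mk X)
  obtain ⟨V, hVΦ, hVν, hVrest⟩ := exists_subset_card Φ hΦinf ν
    (by rw [hfixB]; exact hνX)
  have hVinf : V.Infinite := by
    rw [← Set.infinite_coe_iff]
    exact Cardinal.infinite_iff.mpr (by rw [hVν]; exact hν)
  obtain ⟨j2, V1, hj2pair, hj2supp, hV1V, hV1c⟩ := exists_pairing V hVinf
  have hV1ν : Cardinal.mk ↥V1 = ν := hV1c.trans hVν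
  have hΦVX : Cardinal.mk ↥(Φ \ V) = Cardinal.mk X := by rw [hVrest, hfixB]
  have hfixj2 : Cardinal.mk ↥{x | j2 x = x} = Cardinal.mk X := by
    rw [fix_eq_compl_psupp, hj2supp]
    refine mk_compl_full V (Φ \ V) (fun w hw => hw.2) ?_ ?_
    · rw [hVν, hΦVX]; exact hνX
    · rw [hΦVX]; exact Cardinal.aleph0_le_mk X
  obtain ⟨u, hu⟩ := IsPairing.exists_conj hj hj2pair (hLj.trans hV1ν.symm)
    (by rw [hfixj, hfixj2])
  have hj2comp : Compatible 𝓔 j2 := by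
    rw [hu]; exact Compatible.conj hc hAll u hjcomp
  have hd : ∀ x, ι x ≠ x → j2 x = x := by
    intro x hx
    have hxs : x ∈ psupp ι := hx
    rw [hιsupp] at hxs
    have hxV : x ∉ V := fun hcc => (hVΦ hcc) hxs
    by_contra hne
    exact hxV (hj2supp ▸ (hne : x ∈ psupp j2))
  have hj1pair : IsPairing (ι * j2) (B ∪ V1) := hιpair.mul hj2pair hd
  have hj1L : Cardinal.mk ↥(B ∪ V1) = ν := by
    have hdisj : Disjoint B V1 := by
      rw [Set.disjoint_left]
      intro x hx1 hx2
      exact (hVΦ (hV1V hx2)) (Or.inl hx1)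
    rw [Cardinal.mk_union_of_disjoint hdisj, hV1ν, card_add_eq hBle hν]
  have hj1fix : Cardinal.mk ↥{x | (ι * j2) x = x} = Cardinal.mk X := by
    rw [hιpair.mul_fix hj2pair hd, hιfix, fix_eq_compl_psupp, hj2supp, ← Set.diff_eq]
    exact hΦVX
  obtain ⟨u1, hu1⟩ := IsPairing.exists_conj hj hj1pair (hLj.trans hj1L.symm)
    (by rw [hfixj, hj1fix])
  have hj1comp : Compatible 𝓔 (ι * j2) := by
    rw [hu1]; exact Compatible.conj hc hAll u1 hjcomp
  rw [show ι = (ι * j2) * j2⁻¹ from (mul_inv_cancel_right ι j2).symm] at hι ⊢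
  exact Compatible.mul hc hj1comp (Compatible.inv hc hj2comp)

lemma compatible_of_le_supp {X : Type*} [Infinite X] {𝓔 : Set (Set (X × X))}
    (hc : IsCoarse 𝓔) (hAll : ∀ f : Equiv.Perm X, IsAsymorphism 𝓔 f)
    (g h0 : Equiv.Perm X) (hh0 : Compatible 𝓔 h0)
    (hle : Cardinal.mk ↥(psupp g) ≤ Cardinal.mk ↥(psupp h0))
    (hginf : (psupp g).Infinite) : Compatible 𝓔 g := by
  classical
  set ν := Cardinal.mk ↥(psupp g) with hνdef
  have hν : Cardinal.aleph0 ≤ ν := Cardinal.infinite_iff.mp hginf.to_subtype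
  obtain ⟨j, Lj, hjcomp, hjpair, hLj, hfixj⟩ := exists_base_pairing hc hAll h0 hh0 ν hν hle
  obtain ⟨A, hA1, hA2⟩ := exists_three_classes g
  have hclass : ∀ i : Fin 3, ∃ s ∈ 𝓔, ∀ x ∈ A i, (x, g x) ∈ s := by
    intro i
    have hAsupp := (hA2 i).1
    have hAdisj : ∀ x ∈ A i, g x ∉ A i := (hA2 i).2
    by_cases hfin : (A i).Finite
    · have hcomp : Compatible 𝓔 (swapInv g (A i) hAdisj) := by
        apply compatible_of_finite_supp hc
        rw [swapInv_psupp g (A i) hAdisj hAsupp]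
        exact hfin.union (hfin.image g)
      obtain ⟨s, hs, hss⟩ := hcomp
      exact ⟨s, hs, fun x hx => by
        rw [← swapInv_apply_mem g (A i) hAdisj hx]; exact hss x⟩
    · have hAinf : (A i).Infinite := hfin
      obtain ⟨B1, hB1A, hB1c, hB1rest⟩ :=
        exists_subset_card (A i) hAinf (Cardinal.mk ↥(A i)) le_rfl
      set B2 := A i \ B1 with hB2
      have hA_card_inf : Cardinal.aleph0 ≤ Cardinal.mk ↥(A i) :=
        Cardinal.infinite_iff.mp hAinf.to_subtype
      have hhalf : ∀ B W : Set X, B ⊆ A i → W ⊆ A i → Disjoint W B →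
          Cardinal.mk ↥B = Cardinal.mk ↥(A i) → Cardinal.mk ↥W = Cardinal.mk ↥(A i) →
          ∃ s ∈ 𝓔, ∀ x ∈ B, (x, g x) ∈ s := by
        intro B W hBA hWA hWB hBc hWc
        have hBdisj : ∀ x ∈ B, g x ∉ B := fun x hx hcc => hAdisj x (hBA hx) (hBA hcc)
        have hBsupp : B ⊆ psupp g := hBA.trans hAsupp
        have hBle : Cardinal.mk ↥B ≤ ν := Cardinal.mk_le_mk_of_subset hBsupp
        have hWcompl : W ⊆ (B ∪ g '' B)ᶜ := by
          intro w hw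
          rintro (hcc | hcc)
          · exact Set.disjoint_left.mp hWB hw hcc
          · obtain ⟨b, hb, rfl⟩ := hcc
            exact hAdisj b (hBA hb) (hWA hw)
        have hBinf : Cardinal.aleph0 ≤ Cardinal.mk ↥B := by rw [hBc]; exact hA_card_inf
        have hfixB : Cardinal.mk ↥((B ∪ g '' B)ᶜ) = Cardinal.mk X := by
          refine mk_compl_full _ W hWcompl ?_ ?_
          · refine le_trans (Cardinal.mk_union_le _ _) ?_
            rw [Cardinal.mk_image_eq g.injective, Cardinal.add_eq_self hBinf, hBc, hWc]
          · rw [hWc]; exact hA_card_inf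
        obtain ⟨s, hs, hss⟩ := piece_compatible hc hAll hjpair hjcomp hν hLj hfixj
          g B hBsupp hBdisj hBle hfixB
        exact ⟨s, hs, fun x hx => by
          rw [← swapInv_apply_mem g B hBdisj hx]; exact hss x⟩
      obtain ⟨s1, hs1, hss1⟩ :=
        hhalf B1 B2 hB1A Set.diff_subset Set.disjoint_sdiff_left hB1c hB1rest
      obtain ⟨s2, hs2, hss2⟩ :=
        hhalf B2 B1 Set.diff_subset hB1A Set.disjoint_sdiff_right hB1rest hB1c
      refine ⟨s1 ∪ s2, hc.union_mem hs1 hs2, ?_⟩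
      intro x hx
      by_cases hx1 : x ∈ B1
      · exact Or.inl (hss1 x hx1)
      · exact Or.inr (hss2 x ⟨hx, hx1⟩)
  obtain ⟨s0, hs0, hss0⟩ := hclass 0
  obtain ⟨sA, hsA, hssA⟩ := hclass 1
  obtain ⟨sB, hsB, hssB⟩ := hclass 2
  have hmem : s0 ∪ (sA ∪ sB) ∈ 𝓔 := hc.union_mem hs0 (hc.union_mem hsA hsB)
  refine ⟨s0 ∪ (sA ∪ sB), hmem, ?_⟩
  intro x
  by_cases hx : g x = x
  · rw [hx]
    exact hc.refl _ hmem x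
  · have hxs : x ∈ psupp g := hx
    rw [hA1] at hxs
    simp only [Set.mem_iUnion] at hxs
    obtain ⟨i, hi⟩ := hxs
    fin_cases i
    · exact Or.inl (hss0 x hi)
    · exact Or.inr (Or.inl (hssA x hi))
    · exact Or.inr (Or.inr (hssB x hi))

end Step23
section Final

lemma psupp_conj {X : Type*} (u g : Equiv.Perm X) :
    psupp (u * g * u⁻¹) = u '' psupp g := by
  ext x
  constructor
  · intro hx
    have hx' : u (g (u⁻¹ x)) ≠ x := hx
    refine ⟨u⁻¹ x, ?_, by simp⟩
    show g (u⁻¹ x) ≠ u⁻¹ x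
    intro hcc
    apply hx'
    rw [hcc]; simp
  · rintro ⟨y, hy, rfl⟩
    show u (g (u⁻¹ (u y))) ≠ u y
    simp only [Equiv.Perm.inv_def, Equiv.symm_apply_apply]
    intro hcc
    exact hy (u.injective hcc)

lemma macroUniform_of_permCoarse {X : Type*} {κ : Cardinal} (u : Equiv.Perm X)
    {𝓔 : Set (Set (X × X))} (hEq : 𝓔 = permCoarse (SuppLT X κ)) :
    MacroUniform 𝓔 ⇑u := by
  classical
  intro s hs
  rw [hEq] at hs
  obtain ⟨hrefl, F, hFG, h1F, hsub⟩ := hs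
  have h1img : (1 : Equiv.Perm X) ∈ F.image (fun g => u * g * u⁻¹) :=
    Finset.mem_image.mpr ⟨1, h1F, by group⟩
  refine ⟨EF (F.image (fun g => u * g * u⁻¹)), ?_, ?_⟩
  · rw [hEq]
    refine ⟨?_, F.image (fun g => u * g * u⁻¹), ?_, h1img, subset_rfl⟩
    · intro x
      exact ⟨1, h1img, by simp⟩
    · intro f hf
      simp only [Finset.coe_image, Set.mem_image, Finset.mem_coe] at hf
      obtain ⟨g0, hg0, rfl⟩ := hf
      show Cardinal.mk ↥(psupp (u * g0 * u⁻¹)) < κ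
      rw [psupp_conj, Cardinal.mk_image_eq u.injective]
      exact hFG hg0
  · intro x y hxy
    obtain ⟨g0, hg0, hy⟩ := hsub hxy
    refine ⟨u * g0 * u⁻¹, Finset.mem_image_of_mem _ hg0, ?_⟩
    show u y = (u * g0 * u⁻¹) (u x)
    have hy' : y = g0 x := hy
    rw [hy']
    simp

end Final
theorem asymorphism_characterization {X : Type*} [Infinite X]
    (𝓔 : Set (Set (X × X))) (h : IsCoarse 𝓔) (hfin : Finitary 𝓔) :
    (∀ f : Equiv.Perm X, IsAsymorphism 𝓔 f) ↔
      ∃ κ : Cardinal, Cardinal.aleph0 ≤ κ ∧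
        κ ≤ Order.succ (Cardinal.mk X) ∧
        𝓔 = permCoarse (SuppLT X κ) := by
  classical
  constructor
  · intro hAll
    set S : Set Cardinal := {lam | Cardinal.aleph0 ≤ lam ∧
      ∀ g : Equiv.Perm X, Compatible 𝓔 g → Cardinal.mk ↥(psupp g) < lam} with hS
    have hsucc : Order.succ (Cardinal.mk X) ∈ S := by
      constructor
      · exact le_trans (Cardinal.aleph0_le_mk X) (Order.le_succ _)
      · intro g _
        exact Order.lt_succ_iff.mpr (Cardinal.mk_set_le _)
    have hSne : S.Nonempty := ⟨_, hsucc⟩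
    set κ := Cardinal.lt_wf.min S hSne with hκdef
    have hκS : κ ∈ S := Cardinal.lt_wf.min_mem S hSne
    have hκmin : ∀ lam ∈ S, ¬ lam < κ := fun lam hlam =>
      Cardinal.lt_wf.not_lt_min S hlam
    refine ⟨κ, hκS.1, le_of_not_gt (hκmin _ hsucc), ?_⟩
    ext s
    constructor
    · intro hs
      set s' := s ∪ relInv s with hs'def
      have hs' : s' ∈ 𝓔 := h.union_mem hs (h.inv s hs)
      have hsymm : ∀ p ∈ s', (p.2, p.1) ∈ s' := by
        rintro ⟨a, b⟩ (hp | hp)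
        · exact Or.inr hp
        · exact Or.inl hp
      obtain ⟨n, hn⟩ := hfin s' hs'
      obtain ⟨k, ι, hι1, hι2⟩ :=
        exists_involutions_cover s' hsymm (fun x => h.refl s' hs' x) n hn
      refine ⟨fun x => h.refl s hs x, insert 1 (Finset.image ι Finset.univ), ?_,
        Finset.mem_insert_self _ _, ?_⟩
      · intro f hf
        simp only [Finset.coe_insert, Set.mem_insert_iff, Finset.coe_image,
          Set.mem_image, Finset.mem_coe, Finset.mem_univ] at hf
        rcases hf with rfl | ⟨i, -, rfl⟩
        · show Cardinal.mk ↥(psupp (1 : Equiv.Perm X)) < κ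
          have he : psupp (1 : Equiv.Perm X) = ∅ := by ext x; simp [psupp]
          rw [he]
          refine lt_of_lt_of_le ?_ hκS.1
          simp
          exact Cardinal.aleph0_pos
        · exact hκS.2 _ ⟨s', hs', hι1 i⟩
      · rintro ⟨a, b⟩ hab
        rcases hι2 (a, b) (Or.inl hab) with he | ⟨i, hi⟩
        · exact ⟨1, Finset.mem_insert_self _ _, by simpa using he.symm⟩
        · exact ⟨ι i, Finset.mem_insert_of_mem
            (Finset.mem_image_of_mem _ (Finset.mem_univ i)), hi.symm⟩
    · rintro ⟨hrefl, F, hFsub, h1F, hsEF⟩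
      have hcomp : ∀ f ∈ F, Compatible 𝓔 f := by
        intro f hf
        have hfκ : Cardinal.mk ↥(psupp f) < κ := hFsub hf
        by_cases hfin' : (psupp f).Finite
        · exact compatible_of_finite_supp h f hfin'
        · have hsuppinf : (psupp f).Infinite := hfin'
          have hν : Cardinal.aleph0 ≤ Cardinal.mk ↥(psupp f) :=
            Cardinal.infinite_iff.mp hsuppinf.to_subtype
          have hex : ∃ h0 : Equiv.Perm X, Compatible 𝓔 h0 ∧
              Cardinal.mk ↥(psupp f) ≤ Cardinal.mk ↥(psupp h0) := by
            by_contra hcon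
            push_neg at hcon
            have hmem : Cardinal.mk ↥(psupp f) ∈ S := ⟨hν, fun g hg => hcon g hg⟩
            exact hκmin _ hmem hfκ
          obtain ⟨h0, hh0, hle⟩ := hex
          exact compatible_of_le_supp h hAll f h0 hh0 hle hsuppinf
      have hch : ∀ f : {f // f ∈ F}, ∃ sf ∈ 𝓔, ∀ x, (x, (f : Equiv.Perm X) x) ∈ sf :=
        fun f => hcomp f f.2
      choose sf hsf1 hsf2 using hch
      have hU : diagRel X ∪ ⋃ f ∈ F.attach, sf f ∈ 𝓔 :=
        h.biUnion_mem F.attach sf (fun f _ => hsf1 f)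
      refine h.subrel _ hU s hrefl ?_
      rintro ⟨a, b⟩ hab
      obtain ⟨g0, hg0, hb⟩ := hsEF hab
      refine Or.inr ?_
      simp only [Set.mem_iUnion]
      refine ⟨⟨g0, hg0⟩, F.mem_attach _, ?_⟩
      have hb' : b = g0 a := hb
      rw [hb']
      exact hsf2 ⟨g0, hg0⟩ a
  · rintro ⟨κ, hκ0, hκle, hEq⟩ f
    exact ⟨macroUniform_of_permCoarse f hEq, macroUniform_of_permCoarse f.symm hEq⟩
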